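/- Let 1/10 < σ < 1/2 and let t₁,…,tₙ be non-negative reals summing to 1. Then at least one of the following holds: (Type 0) some tᵢ ≥ 1/2 + σ; (Type I/II) there is a partition {1,…,n} = S ∪ T with 1/2 − σ < Σ_{i∈S} tᵢ ≤ Σ_{i∈T} tᵢ < 1/2 + σ; (Type III) there exist distinct indices i,j,k with 2σ ≤ tᵢ ≤ tⱼ ≤ t_k ≤ 1/2 − σ and tᵢ+tⱼ ≥ 1/2+σ, tᵢ+t_k ≥ 1/2+σ, tⱼ+t_k ≥ 1/2+σ. -/

import Mathlib

/-- The combinatorial lemma (Lemma 3.1 of Polymath8a): for `1/10 < σ < 1/2` and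
non-negative reals `t₁,…,tₙ` summing to `1`, one of the Type 0, Type I/II, or
Type III alternatives holds. -/
theorem combinatorial_lemma (n : ℕ) (hn : 0 < n) (σ : ℝ)
    (hσ1 : 1 / 10 < σ) (hσ2 : σ < 1 / 2)
    (t : Fin n → ℝ) (ht : ∀ i, 0 ≤ t i) (hsum : ∑ i, t i = 1) :
    (∃ i, 1 / 2 + σ ≤ t i) ∨
    (∃ S : Finset (Fin n),
      1 / 2 - σ < ∑ i ∈ S, t i ∧ ∑ i ∈ S, t i ≤ ∑ i ∈ Sᶜ, t i ∧
      ∑ i ∈ Sᶜ, t i < 1 / 2 + σ) ∨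
    (∃ i j k : Fin n, i ≠ j ∧ i ≠ k ∧ j ≠ k ∧
      2 * σ ≤ t i ∧ t i ≤ t j ∧ t j ≤ t k ∧ t k ≤ 1 / 2 - σ ∧
      1 / 2 + σ ≤ t i + t j ∧ 1 / 2 + σ ≤ t i + t k ∧ 1 / 2 + σ ≤ t j + t k) := by
  classical
  by_cases h0 : ∃ i, 1 / 2 + σ ≤ t i
  · exact Or.inl h0
  push_neg at h0
  by_cases h1 : (∃ S : Finset (Fin n),
      1 / 2 - σ < ∑ i ∈ S, t i ∧ ∑ i ∈ S, t i ≤ ∑ i ∈ Sᶜ, t i ∧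
      ∑ i ∈ Sᶜ, t i < 1 / 2 + σ)
  · exact Or.inr (Or.inl h1)
  push_neg at h1
  have hcompl : ∀ S : Finset (Fin n), ∑ i ∈ Sᶜ, t i = 1 - ∑ i ∈ S, t i := by
    intro S
    have h := Finset.sum_compl_add_sum S t
    rw [hsum] at h
    linarith
  -- every subset sum avoids the interval (1/2-σ, 1/2+σ)
  have dich : ∀ S : Finset (Fin n),
      ∑ i ∈ S, t i ≤ 1 / 2 - σ ∨ 1 / 2 + σ ≤ ∑ i ∈ S, t i := by
    intro S
    by_contra hc
    push_neg at hc
    obtain ⟨hA, hB⟩ := hc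
    rcases le_total (∑ i ∈ S, t i) (1 / 2) with h | h
    · have h2 := h1 S hA (by rw [hcompl]; linarith)
      rw [hcompl] at h2
      linarith
    · have h2 := h1 Sᶜ
      rw [compl_compl, hcompl] at h2
      have h3 := h2 (by linarith) (by linarith)
      linarith
  -- extension lemma: adding small elements keeps the sum ≤ 1/2 - σ
  have ext : ∀ (A B : Finset (Fin n)), (∀ i ∈ A, t i < 2 * σ) →
      ∑ i ∈ B, t i ≤ 1 / 2 - σ → ∑ i ∈ A ∪ B, t i ≤ 1 / 2 - σ := by
    intro A
    induction A using Finset.induction_on with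
    | empty => intro B _ hB; simpa using hB
    | @insert a s ha ih =>
      intro B hsmall hB
      have h' := ih B (fun i hi => hsmall i (Finset.mem_insert_of_mem hi)) hB
      by_cases hm : a ∈ s ∪ B
      · rw [Finset.insert_union, Finset.insert_eq_self.mpr hm]
        exact h'
      · rcases dich (insert a s ∪ B) with h | h
        · exact h
        · exfalso
          rw [Finset.insert_union, Finset.sum_insert hm] at h
          have ha2 : t a < 2 * σ := hsmall a (Finset.mem_insert_self a s)
          linarith
  set L : Finset (Fin n) := Finset.univ.filter (fun i => 2 * σ ≤ t i) with hL
  have hmemL : ∀ i, i ∈ L ↔ 2 * σ ≤ t i := by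
    intro i; simp [hL]
  have hmemLc : ∀ i, i ∈ Lᶜ ↔ t i < 2 * σ := by
    intro i; simp [hL]
  have hsmallsum : ∑ i ∈ Lᶜ, t i ≤ 1 / 2 - σ := by
    have := ext Lᶜ ∅ (fun i hi => (hmemLc i).mp hi) (by simp; linarith)
    simpa using this
  have hlargesum : 1 / 2 + σ ≤ ∑ i ∈ L, t i := by
    have := hcompl L
    linarith
  have hsingle : ∀ i, t i ≤ 1 / 2 - σ := by
    intro i
    rcases dich {i} with h | h
    · simpa using h
    · simp only [Finset.sum_singleton] at h
      exact absurd h (not_le.mpr (h0 i))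
  have hpair : ∀ i j : Fin n, i ≠ j → 2 * σ ≤ t i → 2 * σ ≤ t j →
      1 / 2 + σ ≤ t i + t j := by
    intro i j hij hi hj
    rcases dich {i, j} with h | h
    · rw [Finset.sum_pair hij] at h; linarith
    · rwa [Finset.sum_pair hij] at h
  have hcard3 : L.card ≤ 3 := by
    by_contra hc
    push_neg at hc
    obtain ⟨s, hsub, hcs⟩ := Finset.exists_subset_card_eq (s := L) (n := 4) hc
    have hspos : 0 < s.card := by omega
    obtain ⟨a, ha⟩ := Finset.card_pos.mp hspos
    have herase : (s.erase a).card = 3 := by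
      rw [Finset.card_erase_of_mem ha, hcs]
    obtain ⟨b, c, d, hbc, hbd, hcd, hsst⟩ := Finset.card_eq_three.mp herase
    have hbs : b ∈ s.erase a := by rw [hsst]; simp
    have hcs' : c ∈ s.erase a := by rw [hsst]; simp
    have hds : d ∈ s.erase a := by rw [hsst]; simp
    have hab : a ≠ b := fun h => (Finset.ne_of_mem_erase hbs) h.symm
    have hmem : ∀ x ∈ s, 2 * σ ≤ t x := fun x hx => (hmemL x).mp (hsub hx)
    have hsum_s : ∑ i ∈ s, t i ≤ 1 := by
      rw [← hsum]
      exact Finset.sum_le_sum_of_subset_of_nonneg (Finset.subset_univ s)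
        (fun i _ _ => ht i)
    have hseq : s = insert a (s.erase a) := (Finset.insert_erase ha).symm
    have hsum_s' : ∑ i ∈ s, t i = t a + (t b + (t c + t d)) := by
      rw [hseq, Finset.sum_insert (Finset.notMem_erase a s), hsst,
        Finset.sum_insert (by simp [hbc, hbd]),
        Finset.sum_insert (by simp [hcd]), Finset.sum_singleton]
    have h1 := hpair a b hab (hmem a ha) (hmem b (Finset.mem_of_mem_erase hbs))
    have h2 := hpair c d hcd (hmem c (Finset.mem_of_mem_erase hcs'))
      (hmem d (Finset.mem_of_mem_erase hds))
    linarith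
  have main : ∀ x y z : Fin n, x ≠ y → x ≠ z → y ≠ z →
      2 * σ ≤ t x → 2 * σ ≤ t y → 2 * σ ≤ t z → t x ≤ t y → t y ≤ t z →
      ((∃ i, 1 / 2 + σ ≤ t i) ∨
      (∃ S : Finset (Fin n),
        1 / 2 - σ < ∑ i ∈ S, t i ∧ ∑ i ∈ S, t i ≤ ∑ i ∈ Sᶜ, t i ∧
        ∑ i ∈ Sᶜ, t i < 1 / 2 + σ) ∨
      (∃ i j k : Fin n, i ≠ j ∧ i ≠ k ∧ j ≠ k ∧
        2 * σ ≤ t i ∧ t i ≤ t j ∧ t j ≤ t k ∧ t k ≤ 1 / 2 - σ ∧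
        1 / 2 + σ ≤ t i + t j ∧ 1 / 2 + σ ≤ t i + t k ∧
        1 / 2 + σ ≤ t j + t k)) := by
    intro x y z hxy hxz hyz hx hy hz hxy' hyz'
    exact Or.inr (Or.inr ⟨x, y, z, hxy, hxz, hyz, hx, hxy', hyz', hsingle z,
      hpair x y hxy hx hy, hpair x z hxz hx hz, hpair y z hyz hy hz⟩)
  interval_cases h : L.card
  · -- card 0
    exfalso
    rw [Finset.card_eq_zero.mp h, Finset.sum_empty] at hlargesum
    linarith
  · -- card 1
    exfalso
    obtain ⟨i, hi⟩ := Finset.card_eq_one.mp h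
    rw [hi, Finset.sum_singleton] at hlargesum
    exact absurd hlargesum (not_le.mpr (h0 i))
  · -- card 2
    exfalso
    obtain ⟨i, j, hij, hLij⟩ := Finset.card_eq_two.mp h
    have hiL : i ∈ L := by rw [hLij]; simp
    have hdisj : Disjoint Lᶜ {i} := by
      simp [Finset.disjoint_singleton_right, hiL]
    have := ext Lᶜ {i} (fun x hx => (hmemLc x).mp hx)
      (by rw [Finset.sum_singleton]; exact hsingle i)
    rw [Finset.sum_union hdisj, Finset.sum_singleton, hcompl L, hLij,
      Finset.sum_pair hij] at this
    have := h0 j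
    linarith
  · -- card 3
    obtain ⟨a, b, c, hab, hac, hbc, hLabc⟩ := Finset.card_eq_three.mp h
    have hamem : 2 * σ ≤ t a := (hmemL a).mp (by rw [hLabc]; simp)
    have hbmem : 2 * σ ≤ t b := (hmemL b).mp (by rw [hLabc]; simp)
    have hcmem : 2 * σ ≤ t c := (hmemL c).mp (by rw [hLabc]; simp)
    rcases le_total (t a) (t b) with h1 | h1
    · rcases le_total (t b) (t c) with h2 | h2
      · exact main a b c hab hac hbc hamem hbmem hcmem h1 h2
      · rcases le_total (t a) (t c) with h3 | h3
        · exact main a c b hac hab hbc.symm hamem hcmem hbmem h3 h2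
        · exact main c a b hac.symm hbc.symm hab hcmem hamem hbmem h3 h1
    · rcases le_total (t a) (t c) with h2 | h2
      · exact main b a c hab.symm hbc hac hbmem hamem hcmem h1 h2
      · rcases le_total (t b) (t c) with h3 | h3
        · exact main b c a hbc hab.symm hac.symm hbmem hcmem hamem h3 h2
        · exact main c b a hbc.symm hac.symm hab.symm hcmem hbmem hamem h3 h1
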